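/- Let L : ℝ^p → ℝ be differentiable, H-strongly convex with (1/γ)-Lipschitz gradient, and consider θ_{r+1} = θ_r - η g_r for r = 0,...,k-1 with E[g_r | θ_r] = ∇L(θ_r). Then ∑_{r=0}^{k-1} E[L(θ_r) - L(θ_0)] ≤ -(1/(2η)) E‖θ_k - θ_0‖² - (H/2)∑_{r=0}^{k-1} E‖θ_r - θ_0‖² + (η/2) ∑_{r=0}^{k-1} E‖g_r‖². -/

import Mathlib

open MeasureTheory Finset
open scoped RealInnerProductSpace

private lemma condexp_clm {α E F : Type*} {m m0 : MeasurableSpace α} {μ : Measure α}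
    [NormedAddCommGroup E] [NormedSpace ℝ E] [CompleteSpace E]
    [NormedAddCommGroup F] [NormedSpace ℝ F] [CompleteSpace F]
    (hm : m ≤ m0) [SigmaFinite (μ.trim hm)] (T : E →L[ℝ] F) {f : α → E}
    (hf : Integrable f μ) :
    (fun ω => T ((μ[f|m]) ω)) =ᵐ[μ] μ[fun ω => T (f ω)|m] := by
  refine ae_eq_condExp_of_forall_setIntegral_eq hm (T.integrable_comp hf) ?_ ?_ ?_
  · intro s _ _
    exact (T.integrable_comp integrable_condExp).integrableOn
  · intro s hs hμs
    rw [T.integral_comp_comm integrable_condExp.integrableOn,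
      T.integral_comp_comm hf.integrableOn, setIntegral_condExp hm hf hs]
  · exact (T.continuous.comp_stronglyMeasurable stronglyMeasurable_condExp).aestronglyMeasurable

private lemma memLp_inner_integrable {α E : Type*} [MeasurableSpace α] {μ : Measure α}
    [NormedAddCommGroup E] [InnerProductSpace ℝ E]
    {f g : α → E} (hf : MemLp f 2 μ) (hg : MemLp g 2 μ) :
    Integrable (fun ω => ⟪f ω, g ω⟫) μ := by
  have h := MeasureTheory.L2.integrable_inner (𝕜 := ℝ) (hf.toLp f) (hg.toLp g)
  refine h.congr ?_
  filter_upwards [hf.coeFn_toLp, hg.coeFn_toLp] with ω h1 h2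
  rw [h1, h2]

private lemma memLp_mul_integrable {α : Type*} [MeasurableSpace α] {μ : Measure α}
    {f g : α → ℝ} (hf : MemLp f 2 μ) (hg : MemLp g 2 μ) :
    Integrable (fun ω => f ω * g ω) μ := by
  have h := memLp_inner_integrable hf hg
  simpa [RCLike.inner_apply, mul_comm] using h

private lemma memLp_norm_sq_integrable {α E : Type*} [MeasurableSpace α] {μ : Measure α}
    [NormedAddCommGroup E] {f : α → E} (hf : MemLp f 2 μ) :
    Integrable (fun ω => ‖f ω‖ ^ 2) μ := by
  simpa using hf.norm.integrable_sq

private lemma integral_inner_swap {p : ℕ} {Ω : Type*} [mΩ : MeasurableSpace Ω] {μ : Measure Ω}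
    [IsProbabilityMeasure μ] {θf gf Gf : Ω → EuclideanSpace ℝ (Fin p)}
    (c : EuclideanSpace ℝ (Fin p))
    (hθmeas : Measurable θf) (hθ2 : MemLp θf 2 μ) (hg2 : MemLp gf 2 μ)
    (hG2 : MemLp Gf 2 μ)
    (hunb : μ[gf | MeasurableSpace.comap θf inferInstance] =ᵐ[μ] Gf) :
    ∫ ω, ⟪Gf ω, θf ω - c⟫ ∂μ = ∫ ω, ⟪gf ω, θf ω - c⟫ ∂μ := by
  classical
  have hm : MeasurableSpace.comap θf inferInstance ≤ mΩ := hθmeas.comap_le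
  haveI : SigmaFinite (μ.trim hm) := inferInstance
  have hθm : Measurable[MeasurableSpace.comap θf inferInstance] θf :=
    Measurable.of_comap_le le_rfl
  -- component functions
  set X : Ω → EuclideanSpace ℝ (Fin p) := fun ω => θf ω - c with hXdef
  have hX2 : MemLp X 2 μ := hθ2.sub (memLp_const c)
  have hXi2 : ∀ i, MemLp (fun ω => X ω i) 2 μ := fun i => by
    have := (EuclideanSpace.proj (𝕜 := ℝ) i).comp_memLp' hX2
    exact this
  have hgi2 : ∀ i, MemLp (fun ω => gf ω i) 2 μ := fun i => by
    have := (EuclideanSpace.proj (𝕜 := ℝ) i).comp_memLp' hg2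
    exact this
  have hGi2 : ∀ i, MemLp (fun ω => Gf ω i) 2 μ := fun i => by
    have := (EuclideanSpace.proj (𝕜 := ℝ) i).comp_memLp' hG2
    exact this
  have key : ∀ i, ∫ ω, Gf ω i * X ω i ∂μ = ∫ ω, gf ω i * X ω i ∂μ := by
    intro i
    have hfm : StronglyMeasurable[MeasurableSpace.comap θf inferInstance] (fun ω => X ω i) := by
      have h1 : Measurable[MeasurableSpace.comap θf inferInstance] (fun ω => θf ω i) :=
        ((EuclideanSpace.proj (𝕜 := ℝ) i).continuous.measurable).comp hθm
      exact (h1.sub measurable_const).stronglyMeasurable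
    have hcomp : (μ[fun ω => gf ω i|MeasurableSpace.comap θf inferInstance]) =ᵐ[μ]
        fun ω => Gf ω i := by
      have h1 := condexp_clm hm (EuclideanSpace.proj (𝕜 := ℝ) i) (hg2.integrable one_le_two)
      have h2 : (fun ω => (EuclideanSpace.proj (𝕜 := ℝ) i)
          ((μ[gf|MeasurableSpace.comap θf inferInstance]) ω)) =ᵐ[μ]
          fun ω => Gf ω i := by
        filter_upwards [hunb] with ω hω
        simp [hω]
      have h3 : (μ[fun ω => (EuclideanSpace.proj (𝕜 := ℝ) i)
          (gf ω)|MeasurableSpace.comap θf inferInstance]) =ᵐ[μ]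
          fun ω => Gf ω i := h1.symm.trans h2
      simpa using h3
    have hint_fg : Integrable (fun ω => X ω i * gf ω i) μ :=
      memLp_mul_integrable (hXi2 i) (hgi2 i)
    have hint_g : Integrable (fun ω => gf ω i) μ := (hgi2 i).integrable one_le_two
    have hpull := condExp_mul_of_stronglyMeasurable_left (μ := μ) hfm hint_fg hint_g
    calc ∫ ω, Gf ω i * X ω i ∂μ
        = ∫ ω, X ω i * (μ[fun ω => gf ω i|MeasurableSpace.comap θf inferInstance]) ω ∂μ := by
          refine integral_congr_ae ?_
          filter_upwards [hcomp] with ω hω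
          rw [hω]; ring
      _ = ∫ ω, ((fun ω => X ω i) * fun ω => gf ω i) ω ∂μ := by
          rw [← integral_condExp hm (f := (fun ω => X ω i) * fun ω => gf ω i)]
          exact (integral_congr_ae hpull).symm
      _ = ∫ ω, gf ω i * X ω i ∂μ := by
          simp only [Pi.mul_apply]
          refine integral_congr_ae (Filter.Eventually.of_forall fun ω => ?_)
          ring
  have expand : ∀ (u : Ω → EuclideanSpace ℝ (Fin p)),
      (∀ i, MemLp (fun ω => u ω i) 2 μ) →
      ∫ ω, ⟪u ω, X ω⟫ ∂μ = ∑ i : Fin p, ∫ ω, u ω i * X ω i ∂μ := by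
    intro u hu
    rw [← integral_finset_sum]
    · refine integral_congr_ae (Filter.Eventually.of_forall fun ω => ?_)
      simp [PiLp.inner_apply, RCLike.inner_apply, mul_comm]
    · intro i _
      exact memLp_mul_integrable (hu i) (hXi2 i)
  rw [expand Gf hGi2, expand gf hgi2]
  exact Finset.sum_congr rfl fun i _ => key i

theorem sgd_strongly_convex_intermediate {p : ℕ} (γ η H : ℝ) (hγ : 0 < γ)
    (hη : 0 < η) (hH : 0 < H)
    (L : EuclideanSpace ℝ (Fin p) → ℝ) (hL : Differentiable ℝ L)
    (hLip : ∀ x y, ‖gradient L x - gradient L y‖ ≤ (1 / γ) * ‖x - y‖)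
    (hsc : ∀ x y, L y ≥ L x + ⟪gradient L x, y - x⟫ + (H / 2) * ‖y - x‖ ^ 2)
    {Ω : Type*} [MeasurableSpace Ω] (μ : Measure Ω) [IsProbabilityMeasure μ]
    (k : ℕ) (hk : 0 < k)
    (θ : ℕ → Ω → EuclideanSpace ℝ (Fin p))
    (g : ℕ → Ω → EuclideanSpace ℝ (Fin p))
    (θ₀ : EuclideanSpace ℝ (Fin p)) (hθ0 : θ 0 = fun _ => θ₀)
    (hupd : ∀ r < k, ∀ ω, θ (r + 1) ω = θ r ω - η • g r ω)
    (hθmeas : ∀ r, Measurable (θ r))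
    (hg2 : ∀ r, MemLp (g r) 2 μ)
    (hLint : ∀ r, Integrable (fun ω => L (θ r ω)) μ)
    (hunbiased : ∀ r < k,
      μ[g r | MeasurableSpace.comap (θ r) inferInstance] =ᵐ[μ]
        fun ω => gradient L (θ r ω)) :
    ∑ r ∈ range k, ((∫ ω, L (θ r ω) ∂μ) - L θ₀) ≤
      -(1 / (2 * η)) * ∫ ω, ‖θ k ω - θ₀‖ ^ 2 ∂μ
        - (H / 2) * ∑ r ∈ range k, ∫ ω, ‖θ r ω - θ₀‖ ^ 2 ∂μ
        + (η / 2) * ∑ r ∈ range k, ∫ ω, ‖g r ω‖ ^ 2 ∂μ := by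
  classical
  -- L² bounds for the iterates
  have hθ2 : ∀ r, r ≤ k → MemLp (θ r) 2 μ := by
    intro r
    induction r with
    | zero => intro _; rw [hθ0]; exact memLp_const θ₀
    | succ n ih =>
      intro hn
      have hn' : n < k := hn
      have hfun : θ (n + 1) = fun ω => θ n ω - η • g n ω := funext (hupd n hn')
      rw [hfun]
      exact (ih hn'.le).sub ((hg2 n).const_smul η)
  have hX2 : ∀ r, r ≤ k → MemLp (fun ω => θ r ω - θ₀) 2 μ :=
    fun r hr => (hθ2 r hr).sub (memLp_const θ₀)
  -- continuity of the gradient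
  have hgradcont : Continuous (gradient L) := by
    have hlw : LipschitzWith (Real.toNNReal (1 / γ)) (gradient L) := by
      apply LipschitzWith.of_dist_le_mul
      intro x y
      rw [dist_eq_norm, dist_eq_norm]
      calc ‖gradient L x - gradient L y‖ ≤ (1 / γ) * ‖x - y‖ := hLip x y
        _ ≤ Real.toNNReal (1 / γ) * ‖x - y‖ := by
            gcongr
            exact Real.le_coe_toNNReal _
    exact hlw.continuous
  -- the gradient at the iterates is L²
  have hG2 : ∀ r, r ≤ k → MemLp (fun ω => gradient L (θ r ω)) 2 μ := by
    intro r hr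
    have hb : MemLp (fun ω => ‖gradient L θ₀‖ + (1 / γ) * ‖θ r ω - θ₀‖) 2 μ :=
      by
        have h1 : MemLp (fun _ : Ω => ‖gradient L θ₀‖) 2 μ := memLp_const _
        have h2 : MemLp (fun ω => (1 / γ) * ‖θ r ω - θ₀‖) 2 μ := ((hX2 r hr).norm).const_mul _
        exact h1.add h2
    refine MemLp.of_le hb ?_ ?_
    · exact (hgradcont.comp_stronglyMeasurable (hθmeas r).stronglyMeasurable).aestronglyMeasurable
    · refine Filter.Eventually.of_forall fun ω => ?_
      have h0 := hLip (θ r ω) θ₀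
      have h1 : ‖gradient L (θ r ω)‖ - ‖gradient L θ₀‖ ≤ (1 / γ) * ‖θ r ω - θ₀‖ :=
        (norm_sub_norm_le _ _).trans h0
      have h2 : ‖gradient L (θ r ω)‖ ≤ ‖gradient L θ₀‖ + (1 / γ) * ‖θ r ω - θ₀‖ := by
        linarith
      exact h2.trans (le_abs_self _)
  -- the per-step inequality
  have key : ∀ r < k, (∫ ω, L (θ r ω) ∂μ) - L θ₀ ≤
      (1 / (2 * η)) * ((∫ ω, ‖θ r ω - θ₀‖ ^ 2 ∂μ) - ∫ ω, ‖θ (r + 1) ω - θ₀‖ ^ 2 ∂μ)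
        + (η / 2) * (∫ ω, ‖g r ω‖ ^ 2 ∂μ) - (H / 2) * ∫ ω, ‖θ r ω - θ₀‖ ^ 2 ∂μ := by
    intro r hr
    have hXr := hX2 r hr.le
    have hXr1 := hX2 (r + 1) hr
    have hGr := hG2 r hr.le
    have hinner_G : Integrable (fun ω => ⟪gradient L (θ r ω), θ r ω - θ₀⟫) μ :=
      memLp_inner_integrable hGr hXr
    have hnormsq : Integrable (fun ω => ‖θ r ω - θ₀‖ ^ 2) μ := memLp_norm_sq_integrable hXr
    have hnormsq1 : Integrable (fun ω => ‖θ (r + 1) ω - θ₀‖ ^ 2) μ :=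
      memLp_norm_sq_integrable hXr1
    have hgsq : Integrable (fun ω => ‖g r ω‖ ^ 2) μ := memLp_norm_sq_integrable (hg2 r)
    -- pointwise strong convexity inequality
    have hptC : ∀ ω, L (θ r ω) - L θ₀ ≤
        ⟪gradient L (θ r ω), θ r ω - θ₀⟫ - (H / 2) * ‖θ r ω - θ₀‖ ^ 2 := by
      intro ω
      have h := hsc (θ r ω) θ₀
      have he : θ₀ - θ r ω = -(θ r ω - θ₀) := by abel
      rw [he, inner_neg_right, norm_neg] at h
      linarith
    -- integrate it
    have hstep1 : (∫ ω, L (θ r ω) ∂μ) - L θ₀ ≤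
        (∫ ω, ⟪gradient L (θ r ω), θ r ω - θ₀⟫ ∂μ)
          - (H / 2) * ∫ ω, ‖θ r ω - θ₀‖ ^ 2 ∂μ := by
      have hint1 : Integrable (fun ω => L (θ r ω) - L θ₀) μ :=
        (hLint r).sub (integrable_const (L θ₀))
      have hint2 : Integrable
          (fun ω => ⟪gradient L (θ r ω), θ r ω - θ₀⟫ - H / 2 * ‖θ r ω - θ₀‖ ^ 2) μ :=
        hinner_G.sub (hnormsq.const_mul (H / 2))
      have hmono := integral_mono hint1 hint2 (fun ω => hptC ω)
      rw [integral_sub (hLint r) (integrable_const (L θ₀)),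
        integral_sub hinner_G (hnormsq.const_mul (H / 2)),
        integral_const_mul _ _] at hmono
      simpa using hmono
    -- replace the gradient by the stochastic gradient
    have hswap : ∫ ω, ⟪gradient L (θ r ω), θ r ω - θ₀⟫ ∂μ
        = ∫ ω, ⟪g r ω, θ r ω - θ₀⟫ ∂μ :=
      integral_inner_swap θ₀ (hθmeas r) (hθ2 r hr.le) (hg2 r) hGr (hunbiased r hr)
    -- pointwise algebraic identity
    have hptA : ∀ ω, ⟪g r ω, θ r ω - θ₀⟫ =
        (1 / (2 * η)) * (‖θ r ω - θ₀‖ ^ 2 - ‖θ (r + 1) ω - θ₀‖ ^ 2)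
          + (η / 2) * ‖g r ω‖ ^ 2 := by
      intro ω
      have hup : θ (r + 1) ω - θ₀ = (θ r ω - θ₀) - η • g r ω := by
        rw [hupd r hr ω]; abel
      have hnorm : ‖θ (r + 1) ω - θ₀‖ ^ 2 =
          ‖θ r ω - θ₀‖ ^ 2 - 2 * ⟪θ r ω - θ₀, η • g r ω⟫ + ‖η • g r ω‖ ^ 2 := by
        rw [hup]; exact norm_sub_sq_real _ _
      rw [real_inner_smul_right] at hnorm
      have hns : ‖η • g r ω‖ ^ 2 = η ^ 2 * ‖g r ω‖ ^ 2 := by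
        rw [norm_smul, mul_pow, Real.norm_eq_abs, sq_abs]
      rw [hns] at hnorm
      have hcomm : ⟪θ r ω - θ₀, g r ω⟫ = ⟪g r ω, θ r ω - θ₀⟫ := real_inner_comm _ _
      rw [hcomm] at hnorm
      have hη' : η ≠ 0 := ne_of_gt hη
      rw [hnorm]
      field_simp
      ring
    -- integrate the identity
    have hstep2 : ∫ ω, ⟪g r ω, θ r ω - θ₀⟫ ∂μ =
        (1 / (2 * η)) * ((∫ ω, ‖θ r ω - θ₀‖ ^ 2 ∂μ) - ∫ ω, ‖θ (r + 1) ω - θ₀‖ ^ 2 ∂μ)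
          + (η / 2) * ∫ ω, ‖g r ω‖ ^ 2 ∂μ := by
      have hi1 : Integrable (fun ω =>
          (1 / (2 * η)) * (‖θ r ω - θ₀‖ ^ 2 - ‖θ (r + 1) ω - θ₀‖ ^ 2)) μ :=
        (hnormsq.sub hnormsq1).const_mul _
      have hi2 : Integrable (fun ω => (η / 2) * ‖g r ω‖ ^ 2) μ := hgsq.const_mul _
      rw [integral_congr_ae (Filter.Eventually.of_forall hptA),
        integral_add hi1 hi2, integral_const_mul _ _, integral_const_mul _ _,
        integral_sub hnormsq hnormsq1]
    rw [hswap, hstep2] at hstep1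
    linarith
  -- sum the per-step inequalities and telescope
  have hsum : ∑ r ∈ range k, ((∫ ω, L (θ r ω) ∂μ) - L θ₀) ≤
      ∑ r ∈ range k, ((1 / (2 * η)) * ((∫ ω, ‖θ r ω - θ₀‖ ^ 2 ∂μ)
          - ∫ ω, ‖θ (r + 1) ω - θ₀‖ ^ 2 ∂μ)
        + (η / 2) * (∫ ω, ‖g r ω‖ ^ 2 ∂μ)
        - (H / 2) * ∫ ω, ‖θ r ω - θ₀‖ ^ 2 ∂μ) :=
    Finset.sum_le_sum fun r hr => key r (Finset.mem_range.mp hr)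
  have htel : ∑ r ∈ range k, ((∫ ω, ‖θ r ω - θ₀‖ ^ 2 ∂μ)
      - ∫ ω, ‖θ (r + 1) ω - θ₀‖ ^ 2 ∂μ) =
      (∫ ω, ‖θ 0 ω - θ₀‖ ^ 2 ∂μ) - ∫ ω, ‖θ k ω - θ₀‖ ^ 2 ∂μ :=
    Finset.sum_range_sub' (fun r => ∫ ω, ‖θ r ω - θ₀‖ ^ 2 ∂μ) k
  have h0 : (∫ ω, ‖θ 0 ω - θ₀‖ ^ 2 ∂μ) = 0 := by
    rw [hθ0]
    simp
  rw [h0] at htel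
  have hRHS : ∑ r ∈ range k, ((1 / (2 * η)) * ((∫ ω, ‖θ r ω - θ₀‖ ^ 2 ∂μ)
          - ∫ ω, ‖θ (r + 1) ω - θ₀‖ ^ 2 ∂μ)
        + (η / 2) * (∫ ω, ‖g r ω‖ ^ 2 ∂μ)
        - (H / 2) * ∫ ω, ‖θ r ω - θ₀‖ ^ 2 ∂μ) =
      -(1 / (2 * η)) * (∫ ω, ‖θ k ω - θ₀‖ ^ 2 ∂μ)
        - (H / 2) * ∑ r ∈ range k, ∫ ω, ‖θ r ω - θ₀‖ ^ 2 ∂μ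
        + (η / 2) * ∑ r ∈ range k, ∫ ω, ‖g r ω‖ ^ 2 ∂μ := by
    rw [Finset.sum_sub_distrib, Finset.sum_add_distrib, ← Finset.mul_sum, htel,
      ← Finset.mul_sum, ← Finset.mul_sum]
    ring
  rw [hRHS] at hsum
  exact hsum
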